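/- Assume a_n → ∞ and that there exist N-periodic sequences s and z with lim_{n→∞} (r_n·a_n − a_{n−1} − s_n) = 0 and lim_{n→∞} (q_n·a_n − b_n − z_n) = 0. Then lim_{n→∞} (a_{n−1}/a_n − r_n) = 0 and lim_{n→∞} (b_n/a_n − q_n) = 0. Moreover, for every integer j ≥ 1 there is a constant c > 0 such that for all m ≥ 1 one has 𝒱_N(1/a_n : n ≥ m) + 𝒱_N(a_{n+j}/a_n : n ≥ m) + 𝒱_N(b_n/a_n : n ≥ m) ≤ c·f_m, where f_m = 𝒱_N(1/a_n : n ≥ m) + 𝒱_N(r_n·a_n − a_{n−1} : n ≥ m) + 𝒱_N(b_n − q_n·a_n : n ≥ m), the inequality being understood in [0, ∞]. -/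

import Mathlib

open Filter

/-- The total `N`-variation `𝒱_N(x_n : n ≥ m) = Σ_{n=m}^∞ |x_{n+N} − x_n|`, valued in `[0, ∞]`. -/
noncomputable def totalVar (N : ℕ) (x : ℕ → ℝ) (m : ℕ) : ENNReal :=
  ∑' n : ℕ, ENNReal.ofReal |x (m + n + N) - x (m + n)|

lemma totalVar_shift_le (N : ℕ) (x : ℕ → ℝ) (m k : ℕ) :
    totalVar N x (m + k) ≤ totalVar N x m := by
  unfold totalVar
  refine Summable.tsum_le_tsum_of_inj (fun n => k + n) (add_right_injective k)
    (fun c _ => zero_le) (fun n => ?_) ENNReal.summable ENNReal.summable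
  apply le_of_eq
  have h1 : m + k + n = m + (k + n) := by omega
  rw [h1]

lemma totalVar_shift_eq (N : ℕ) (x : ℕ → ℝ) (m k : ℕ) :
    totalVar N (fun n => x (n + k)) m = totalVar N x (m + k) := by
  unfold totalVar
  refine tsum_congr fun n => ?_
  show ENNReal.ofReal |x (m + n + N + k) - x (m + n + k)| = _
  rw [show m + n + N + k = m + k + n + N from by omega, show m + n + k = m + k + n from by omega]

lemma totalVar_le_two (N : ℕ) (x y z : ℕ → ℝ) (C D : ℝ) (hC : 0 ≤ C) (hD : 0 ≤ D) (m : ℕ)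
    (h : ∀ n, |x (n + N) - x n| ≤ C * |y (n + N) - y n| + D * |z (n + N) - z n|) :
    totalVar N x m ≤ ENNReal.ofReal C * totalVar N y m + ENNReal.ofReal D * totalVar N z m := by
  unfold totalVar
  rw [← ENNReal.tsum_mul_left, ← ENNReal.tsum_mul_left, ← ENNReal.tsum_add]
  refine ENNReal.tsum_le_tsum fun n => ?_
  calc ENNReal.ofReal |x (m + n + N) - x (m + n)|
      ≤ ENNReal.ofReal (C * |y (m + n + N) - y (m + n)| + D * |z (m + n + N) - z (m + n)|) :=
        ENNReal.ofReal_le_ofReal (h (m + n))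
    _ ≤ _ := by
        rw [ENNReal.ofReal_add (by positivity) (by positivity), ENNReal.ofReal_mul hC,
          ENNReal.ofReal_mul hD]

lemma ennreal_combine {X Y : ENNReal} {c1 c2 : ℝ} :
    ENNReal.ofReal c1 * X + ENNReal.ofReal c2 * Y ≤ ENNReal.ofReal (max c1 c2) * (X + Y) := by
  rw [mul_add]
  exact add_le_add (mul_le_mul_left (ENNReal.ofReal_le_ofReal (le_max_left _ _)) X)
    (mul_le_mul_left (ENNReal.ofReal_le_ofReal (le_max_right _ _)) Y)

lemma periodic_mod (N : ℕ) (hN : 1 ≤ N) (s : ℕ → ℝ) (hs : ∀ n, s (n + N) = s n) (n : ℕ) :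
    s n = s (n % N) := by
  induction n using Nat.strong_induction_on with
  | _ n ih =>
    rcases lt_or_ge n N with h | h
    · rw [Nat.mod_eq_of_lt h]
    · calc s n = s (n - N + N) := by rw [Nat.sub_add_cancel h]
        _ = s (n - N) := hs _
        _ = s ((n - N) % N) := ih _ (by omega)
        _ = s (n % N) := by rw [← Nat.mod_eq_sub_mod h]

lemma periodic_abs_bound (N : ℕ) (hN : 1 ≤ N) (s : ℕ → ℝ) (hs : ∀ n, s (n + N) = s n) :
    ∃ C, 0 ≤ C ∧ ∀ n, |s n| ≤ C := by
  have hne : (Finset.range N).Nonempty := ⟨0, Finset.mem_range.mpr (by omega)⟩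
  refine ⟨(Finset.range N).sup' hne (fun i => |s i|), ?_, fun n => ?_⟩
  · exact le_trans (abs_nonneg (s 0))
      (Finset.le_sup' (fun i => |s i|) (Finset.mem_range.mpr (show 0 < N by omega)))
  · rw [periodic_mod N hN s hs n]
    exact Finset.le_sup' (fun i => |s i|) (Finset.mem_range.mpr (Nat.mod_lt _ (by omega)))

lemma bound_of_eventually (v : ℕ → ℝ) (M : ℕ) (c : ℝ) (h : ∀ n, M ≤ n → |v n| ≤ c) :
    ∃ D, 0 ≤ D ∧ ∀ n, |v n| ≤ D := by
  have hne : (Finset.range (M + 1)).Nonempty := ⟨0, Finset.mem_range.mpr (by omega)⟩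
  refine ⟨max c ((Finset.range (M + 1)).sup' hne fun i => |v i|), ?_, fun n => ?_⟩
  · exact le_trans (abs_nonneg (v 0))
      (le_max_of_le_right (Finset.le_sup' (fun i => |v i|)
        (Finset.mem_range.mpr (show 0 < M + 1 by omega))))
  · rcases le_or_gt M n with h' | h'
    · exact le_max_of_le_left (h n h')
    · exact le_max_of_le_right (Finset.le_sup' (fun i => |v i|) (Finset.mem_range.mpr (show n < M + 1 by omega)))

lemma lb_of_eventually (v : ℕ → ℝ) (hpos : ∀ n, 0 < v n) (M : ℕ) (c : ℝ) (hc : 0 < c)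
    (h : ∀ n, M ≤ n → c ≤ v n) : ∃ δ, 0 < δ ∧ ∀ n, δ ≤ v n := by
  have hne : (Finset.range (M + 1)).Nonempty := ⟨0, Finset.mem_range.mpr (by omega)⟩
  refine ⟨min c ((Finset.range (M + 1)).inf' hne v), ?_, fun n => ?_⟩
  · refine lt_min hc ?_
    rw [Finset.lt_inf'_iff]
    exact fun i _ => hpos i
  · rcases le_or_gt M n with h' | h'
    · exact le_trans (min_le_left _ _) (h n h')
    · exact le_trans (min_le_right _ _) (Finset.inf'_le _ (Finset.mem_range.mpr (by omega)))

lemma abs_one_div_sub_one_div_le {x y δ : ℝ} (hδ : 0 < δ) (hx : δ ≤ x) (hy : δ ≤ y) :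
    |1 / x - 1 / y| ≤ δ⁻¹ * δ⁻¹ * |x - y| := by
  have hx0 : 0 < x := lt_of_lt_of_le hδ hx
  have hy0 : 0 < y := lt_of_lt_of_le hδ hy
  have heq : 1 / x - 1 / y = (y - x) / (x * y) := by field_simp
  rw [heq, abs_div, abs_of_pos (mul_pos hx0 hy0), abs_sub_comm, div_le_iff₀ (mul_pos hx0 hy0)]
  have h1 : δ * δ ≤ x * y := mul_le_mul hx hy hδ.le hx0.le
  have hnn : 0 ≤ δ⁻¹ * δ⁻¹ * |x - y| :=
    mul_nonneg (mul_nonneg (inv_nonneg.mpr hδ.le) (inv_nonneg.mpr hδ.le)) (abs_nonneg _)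
  have key : δ⁻¹ * δ⁻¹ * |x - y| * (δ * δ) = |x - y| := by field_simp
  calc |x - y| = δ⁻¹ * δ⁻¹ * |x - y| * (δ * δ) := key.symm
    _ ≤ δ⁻¹ * δ⁻¹ * |x - y| * (x * y) := mul_le_mul_of_nonneg_left h1 hnn

lemma abs_mul_sub_mul {X' X Y' Y Bx By : ℝ} (hX' : |X'| ≤ Bx) (hY : |Y| ≤ By) :
    |X' * Y' - X * Y| ≤ Bx * |Y' - Y| + By * |X' - X| := by
  have h : X' * Y' - X * Y = X' * (Y' - Y) + Y * (X' - X) := by ring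
  rw [h]
  calc |X' * (Y' - Y) + Y * (X' - X)| ≤ |X' * (Y' - Y)| + |Y * (X' - X)| := abs_add_le _ _
    _ = |X'| * |Y' - Y| + |Y| * |X' - X| := by rw [abs_mul, abs_mul]
    _ ≤ Bx * |Y' - Y| + By * |X' - X| :=
        add_le_add (mul_le_mul_of_nonneg_right hX' (abs_nonneg _))
          (mul_le_mul_of_nonneg_right hY (abs_nonneg _))
theorem stmt12 (N : ℕ) (hN : 1 ≤ N)
    (r q : ℕ → ℝ) (hrpos : ∀ n, 0 < r n)
    (hrper : ∀ n, r (n + N) = r n) (hqper : ∀ n, q (n + N) = q n)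
    (a b : ℕ → ℝ) (hapos : ∀ n, 0 < a n)
    (s z : ℕ → ℝ) (hsper : ∀ n, s (n + N) = s n) (hzper : ∀ n, z (n + N) = z n)
    (halim : Tendsto a atTop atTop)
    (hs : Tendsto (fun n => r n * a n - a (n - 1) - s n) atTop (nhds 0))
    (hz : Tendsto (fun n => q n * a n - b n - z n) atTop (nhds 0)) :
    (Tendsto (fun n => a (n - 1) / a n - r n) atTop (nhds 0) ∧
      Tendsto (fun n => b n / a n - q n) atTop (nhds 0)) ∧
    ∀ j : ℕ, 1 ≤ j → ∃ c : ℝ, 0 < c ∧ ∀ m : ℕ, 1 ≤ m →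
      totalVar N (fun n => 1 / a n) m + totalVar N (fun n => a (n + j) / a n) m
          + totalVar N (fun n => b n / a n) m
        ≤ ENNReal.ofReal c *
          (totalVar N (fun n => 1 / a n) m + totalVar N (fun n => r n * a n - a (n - 1)) m
            + totalVar N (fun n => b n - q n * a n) m) := by
  have haneq : ∀ n, a n ≠ 0 := fun n => (hapos n).ne'
  -- uniform bounds on the "error" sequences
  obtain ⟨Sc, _, hSc⟩ := periodic_abs_bound N hN s hsper
  obtain ⟨Zc, _, hZc⟩ := periodic_abs_bound N hN z hzper
  obtain ⟨U, hU0, hU⟩ : ∃ U, 0 ≤ U ∧ ∀ n, |r n * a n - a (n - 1)| ≤ U := by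
    obtain ⟨M, hM⟩ := Metric.tendsto_atTop.mp hs 1 one_pos
    refine bound_of_eventually _ M (1 + Sc) fun n hn => ?_
    have h1 := hM n hn
    rw [Real.dist_eq, sub_zero] at h1
    have h2 : r n * a n - a (n - 1) = (r n * a n - a (n - 1) - s n) + s n := by ring
    rw [h2]
    exact le_trans (abs_add_le _ _) (add_le_add h1.le (hSc n))
  obtain ⟨W, hW0, hW⟩ : ∃ W, 0 ≤ W ∧ ∀ n, |b n - q n * a n| ≤ W := by
    obtain ⟨M, hM⟩ := Metric.tendsto_atTop.mp hz 1 one_pos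
    refine bound_of_eventually _ M (1 + Zc) fun n hn => ?_
    have h1 := hM n hn
    rw [Real.dist_eq, sub_zero] at h1
    have h2 : b n - q n * a n = -((q n * a n - b n - z n) + z n) := by ring
    rw [h2, abs_neg]
    exact le_trans (abs_add_le _ _) (add_le_add h1.le (hZc n))
  obtain ⟨α, hα0, hα⟩ : ∃ α, 0 < α ∧ ∀ n, α ≤ a n := by
    obtain ⟨M, hM⟩ := eventually_atTop.mp (halim.eventually_ge_atTop 1)
    exact lb_of_eventually a hapos M 1 one_pos hM
  have hαinv : 0 ≤ α⁻¹ := inv_nonneg.mpr hα0.le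
  -- the limits
  have hva0 : Tendsto (fun n => 1 / a n) atTop (nhds 0) := by
    exact halim.inv_tendsto_atTop.congr fun n => (one_div (a n)).symm
  have hlim1 : Tendsto (fun n => a (n - 1) / a n - r n) atTop (nhds 0) := by
    have hb1 : ∀ n, ‖a (n - 1) / a n - r n‖ ≤ U * (1 / a n) := by
      intro n
      have h1 : a (n - 1) / a n - r n = -((r n * a n - a (n - 1)) * (1 / a n)) := by
        field_simp [haneq n]
        ring
      rw [Real.norm_eq_abs, h1, abs_neg, abs_mul, abs_of_pos (one_div_pos.mpr (hapos n))]
      exact mul_le_mul_of_nonneg_right (hU n) (one_div_pos.mpr (hapos n)).le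
    have ht : Tendsto (fun n => U * (1 / a n)) atTop (nhds 0) := by
      simpa using hva0.const_mul U
    exact squeeze_zero_norm hb1 ht
  have hlim2 : Tendsto (fun n => b n / a n - q n) atTop (nhds 0) := by
    have hb1 : ∀ n, ‖b n / a n - q n‖ ≤ W * (1 / a n) := by
      intro n
      have h1 : b n / a n - q n = (b n - q n * a n) * (1 / a n) := by
        field_simp [haneq n]
      rw [Real.norm_eq_abs, h1, abs_mul, abs_of_pos (one_div_pos.mpr (hapos n))]
      exact mul_le_mul_of_nonneg_right (hW n) (one_div_pos.mpr (hapos n)).le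
    have ht : Tendsto (fun n => W * (1 / a n)) atTop (nhds 0) := by
      simpa using hva0.const_mul W
    exact squeeze_zero_norm hb1 ht
  refine ⟨⟨hlim1, hlim2⟩, ?_⟩
  -- lower bound on the ratios a (n-1) / a n
  obtain ⟨ρ, hρ0, hρ⟩ : ∃ ρ, 0 < ρ ∧ ∀ n, ρ ≤ r n := by
    have hne : (Finset.range N).Nonempty := ⟨0, Finset.mem_range.mpr (by omega)⟩
    refine ⟨(Finset.range N).inf' hne r, ?_, fun n => ?_⟩
    · rw [Finset.lt_inf'_iff]
      exact fun i _ => hrpos i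
    · rw [periodic_mod N hN r hrper n]
      exact Finset.inf'_le _ (Finset.mem_range.mpr (Nat.mod_lt _ (by omega)))
  obtain ⟨δ, hδ0, hδ⟩ : ∃ δ, 0 < δ ∧ ∀ n, δ ≤ a (n - 1) / a n := by
    obtain ⟨M, hM⟩ := Metric.tendsto_atTop.mp hlim1 (ρ / 2) (by positivity)
    refine lb_of_eventually _ (fun n => div_pos (hapos _) (hapos _)) M (ρ / 2) (by positivity)
      fun n hn => ?_
    have h1 := hM n hn
    rw [Real.dist_eq, sub_zero] at h1
    have h2 := (abs_lt.mp h1).1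
    have h3 := hρ n
    linarith
  have hδi : 0 ≤ δ⁻¹ := inv_nonneg.mpr hδ0.le
  -- pointwise variation bound for g n = a (n-1) / a n
  have hg_pt : ∀ n, |a (n + N - 1) / a (n + N) - a (n - 1) / a n| ≤
      U * |1 / a (n + N) - 1 / a n|
      + α⁻¹ * |(r (n + N) * a (n + N) - a (n + N - 1)) - (r n * a n - a (n - 1))| := by
    intro n
    have key : a (n + N - 1) / a (n + N) - a (n - 1) / a n
        = -((r (n + N) * a (n + N) - a (n + N - 1)) * (1 / a (n + N) - 1 / a n)
            + (1 / a n) * ((r (n + N) * a (n + N) - a (n + N - 1)) - (r n * a n - a (n - 1)))) := by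
      rw [hrper n]
      field_simp [haneq n, haneq (n + N)]
      ring
    rw [key, abs_neg]
    have h1 : |r (n + N) * a (n + N) - a (n + N - 1)| ≤ U := hU (n + N)
    have h2 : |1 / a n| ≤ α⁻¹ := by
      rw [abs_of_pos (one_div_pos.mpr (hapos n)), inv_eq_one_div]
      exact one_div_le_one_div_of_le hα0 (hα n)
    calc |(r (n + N) * a (n + N) - a (n + N - 1)) * (1 / a (n + N) - 1 / a n)
          + (1 / a n) * ((r (n + N) * a (n + N) - a (n + N - 1)) - (r n * a n - a (n - 1)))|
        ≤ |(r (n + N) * a (n + N) - a (n + N - 1)) * (1 / a (n + N) - 1 / a n)|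
          + |(1 / a n) * ((r (n + N) * a (n + N) - a (n + N - 1)) - (r n * a n - a (n - 1)))| :=
          abs_add_le _ _
      _ = |r (n + N) * a (n + N) - a (n + N - 1)| * |1 / a (n + N) - 1 / a n|
          + |1 / a n| * |(r (n + N) * a (n + N) - a (n + N - 1)) - (r n * a n - a (n - 1))| := by
          rw [abs_mul, abs_mul]
      _ ≤ _ := add_le_add (mul_le_mul_of_nonneg_right h1 (abs_nonneg _))
          (mul_le_mul_of_nonneg_right h2 (abs_nonneg _))
  -- pointwise variation bound for b n / a n
  have hw_pt : ∀ n, |b (n + N) / a (n + N) - b n / a n| ≤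
      W * |1 / a (n + N) - 1 / a n|
      + α⁻¹ * |(b (n + N) - q (n + N) * a (n + N)) - (b n - q n * a n)| := by
    intro n
    have key : b (n + N) / a (n + N) - b n / a n
        = (b (n + N) - q (n + N) * a (n + N)) * (1 / a (n + N) - 1 / a n)
          + (1 / a n) * ((b (n + N) - q (n + N) * a (n + N)) - (b n - q n * a n)) := by
      rw [hqper n]
      field_simp [haneq n, haneq (n + N)]
      ring
    rw [key]
    have h1 : |b (n + N) - q (n + N) * a (n + N)| ≤ W := hW (n + N)
    have h2 : |1 / a n| ≤ α⁻¹ := by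
      rw [abs_of_pos (one_div_pos.mpr (hapos n)), inv_eq_one_div]
      exact one_div_le_one_div_of_le hα0 (hα n)
    calc |(b (n + N) - q (n + N) * a (n + N)) * (1 / a (n + N) - 1 / a n)
          + (1 / a n) * ((b (n + N) - q (n + N) * a (n + N)) - (b n - q n * a n))|
        ≤ |(b (n + N) - q (n + N) * a (n + N)) * (1 / a (n + N) - 1 / a n)|
          + |(1 / a n) * ((b (n + N) - q (n + N) * a (n + N)) - (b n - q n * a n))| := abs_add_le _ _
      _ = |b (n + N) - q (n + N) * a (n + N)| * |1 / a (n + N) - 1 / a n|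
          + |1 / a n| * |(b (n + N) - q (n + N) * a (n + N)) - (b n - q n * a n)| := by
          rw [abs_mul, abs_mul]
      _ ≤ _ := add_le_add (mul_le_mul_of_nonneg_right h1 (abs_nonneg _))
          (mul_le_mul_of_nonneg_right h2 (abs_nonneg _))
  -- variation bound for b/a
  have hVb : ∀ m, totalVar N (fun n => b n / a n) m ≤
      ENNReal.ofReal (max W α⁻¹) *
        (totalVar N (fun n => 1 / a n) m + totalVar N (fun n => b n - q n * a n) m) :=
    fun m => le_trans (totalVar_le_two N _ _ _ W α⁻¹ hW0 hαinv m hw_pt) ennreal_combine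
  -- upper bound on the step ratios
  have hHub : ∀ n, a (n + 1) / a n ≤ δ⁻¹ := by
    intro n
    have h1 : δ ≤ a n / a (n + 1) := by simpa using hδ (n + 1)
    have h2 := one_div_le_one_div_of_le hδ0 h1
    rwa [one_div_div, one_div] at h2
  have hPb : ∀ (j n : ℕ), a (n + j) / a n ≤ δ⁻¹ ^ j := by
    intro j
    induction j with
    | zero => intro n; simp [div_self (haneq n)]
    | succ j ih =>
      intro n
      have key : a (n + (j + 1)) / a n = a (n + 1 + j) / a (n + 1) * (a (n + 1) / a n) := by
        rw [show n + (j + 1) = n + 1 + j from by omega]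
        field_simp [haneq n, haneq (n + 1)]
      rw [key, pow_succ]
      exact mul_le_mul (ih (n + 1)) (hHub n) (div_nonneg (hapos _).le (hapos _).le)
        (pow_nonneg hδi j)
  have hsplit : ∀ (j n : ℕ), a (n + (j + 1)) / a n
      = a (n + 1 + j) / a (n + 1) * (a (n + 1) / a n) := by
    intro j n
    rw [show n + (j + 1) = n + 1 + j from by omega]
    field_simp [haneq n, haneq (n + 1)]
  -- variation bound for the step-ratio sequence H n = a (n+1) / a n
  have hVH : ∀ m : ℕ, totalVar N (fun t => a (t + 1) / a t) m ≤
      ENNReal.ofReal (max (δ⁻¹ * δ⁻¹ * U) (δ⁻¹ * δ⁻¹ * α⁻¹)) *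
        (totalVar N (fun n => 1 / a n) m + totalVar N (fun n => r n * a n - a (n - 1)) m) := by
    intro m
    have hc1 : 0 ≤ δ⁻¹ * δ⁻¹ * U := mul_nonneg (mul_nonneg hδi hδi) hU0
    have hc2 : 0 ≤ δ⁻¹ * δ⁻¹ * α⁻¹ := mul_nonneg (mul_nonneg hδi hδi) hαinv
    have hpt : ∀ n, |a (n + N + 1) / a (n + N) - a (n + 1) / a n| ≤
        δ⁻¹ * δ⁻¹ * U * |1 / a (n + N + 1) - 1 / a (n + 1)|
        + δ⁻¹ * δ⁻¹ * α⁻¹ *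
          |(r (n + N + 1) * a (n + N + 1) - a (n + N + 1 - 1))
            - (r (n + 1) * a (n + 1) - a (n + 1 - 1))| := by
      intro n
      have hg := hg_pt (n + 1)
      simp only [show n + 1 + N - 1 = n + N from by omega, show n + 1 + N = n + N + 1 from by omega,
        show n + 1 - 1 = n from by omega, show n + N + 1 - 1 = n + N from by omega] at hg ⊢
      have hx1 : δ ≤ a (n + N) / a (n + N + 1) := by
        have := hδ (n + N + 1)
        simpa only [show n + N + 1 - 1 = n + N from by omega] using this
      have hy1 : δ ≤ a n / a (n + 1) := by
        have := hδ (n + 1)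
        simpa only [show n + 1 - 1 = n from by omega] using this
      have hH1 : a (n + N + 1) / a (n + N) = 1 / (a (n + N) / a (n + N + 1)) :=
        (one_div_div _ _).symm
      have hH2 : a (n + 1) / a n = 1 / (a n / a (n + 1)) := (one_div_div _ _).symm
      rw [hH1, hH2]
      calc |1 / (a (n + N) / a (n + N + 1)) - 1 / (a n / a (n + 1))|
          ≤ δ⁻¹ * δ⁻¹ * |a (n + N) / a (n + N + 1) - a n / a (n + 1)| :=
            abs_one_div_sub_one_div_le hδ0 hx1 hy1
        _ ≤ δ⁻¹ * δ⁻¹ * (U * |1 / a (n + N + 1) - 1 / a (n + 1)|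
            + α⁻¹ * |(r (n + N + 1) * a (n + N + 1) - a (n + N))
              - (r (n + 1) * a (n + 1) - a n)|) :=
            mul_le_mul_of_nonneg_left hg (mul_nonneg hδi hδi)
        _ = _ := by ring
    have step := totalVar_le_two N (fun t => a (t + 1) / a t) (fun t => 1 / a (t + 1))
      (fun t => r (t + 1) * a (t + 1) - a (t + 1 - 1)) (δ⁻¹ * δ⁻¹ * U) (δ⁻¹ * δ⁻¹ * α⁻¹)
      hc1 hc2 m hpt
    have e1 : totalVar N (fun t => 1 / a (t + 1)) m = totalVar N (fun n => 1 / a n) (m + 1) :=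
      totalVar_shift_eq N (fun n => 1 / a n) m 1
    have e2 : totalVar N (fun t => r (t + 1) * a (t + 1) - a (t + 1 - 1)) m
        = totalVar N (fun n => r n * a n - a (n - 1)) (m + 1) :=
      totalVar_shift_eq N (fun n => r n * a n - a (n - 1)) m 1
    rw [e1, e2] at step
    calc totalVar N (fun t => a (t + 1) / a t) m
        ≤ ENNReal.ofReal (δ⁻¹ * δ⁻¹ * U) * totalVar N (fun n => 1 / a n) (m + 1)
          + ENNReal.ofReal (δ⁻¹ * δ⁻¹ * α⁻¹) *
            totalVar N (fun n => r n * a n - a (n - 1)) (m + 1) := step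
      _ ≤ ENNReal.ofReal (δ⁻¹ * δ⁻¹ * U) * totalVar N (fun n => 1 / a n) m
          + ENNReal.ofReal (δ⁻¹ * δ⁻¹ * α⁻¹) *
            totalVar N (fun n => r n * a n - a (n - 1)) m :=
          add_le_add (mul_le_mul_right (totalVar_shift_le N _ m 1) _)
            (mul_le_mul_right (totalVar_shift_le N _ m 1) _)
      _ ≤ _ := ennreal_combine
  -- the inductive bound on the j-step ratio sequences
  have hP : ∀ j : ℕ, ∃ C : ℝ, 0 ≤ C ∧ ∀ m : ℕ,
      totalVar N (fun n => a (n + j) / a n) m ≤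
        ENNReal.ofReal C * (totalVar N (fun n => 1 / a n) m
          + totalVar N (fun n => r n * a n - a (n - 1)) m) := by
    intro j
    induction j with
    | zero =>
      refine ⟨0, le_rfl, fun m => ?_⟩
      have h0 : totalVar N (fun n => a (n + 0) / a n) m = 0 := by
        unfold totalVar
        convert tsum_zero with n
        simp [div_self (haneq (m + n + N)), div_self (haneq (m + n))]
      rw [h0]
      exact zero_le
    | succ j ih =>
      obtain ⟨C, hC0, hC⟩ := ih
      set KH := max (δ⁻¹ * δ⁻¹ * U) (δ⁻¹ * δ⁻¹ * α⁻¹) with hKHdef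
      have hKH0 : 0 ≤ KH := le_trans (mul_nonneg (mul_nonneg hδi hδi) hU0) (le_max_left _ _)
      refine ⟨δ⁻¹ ^ j * KH + δ⁻¹ * C, add_nonneg (mul_nonneg (pow_nonneg hδi j) hKH0)
        (mul_nonneg hδi hC0), fun m => ?_⟩
      have hpt : ∀ n, |a (n + N + (j + 1)) / a (n + N) - a (n + (j + 1)) / a n| ≤
          δ⁻¹ ^ j * |a (n + N + 1) / a (n + N) - a (n + 1) / a n|
          + δ⁻¹ * |a (n + N + 1 + j) / a (n + N + 1) - a (n + 1 + j) / a (n + 1)| := by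
        intro n
        rw [hsplit j (n + N), hsplit j n]
        have hX' : |a (n + N + 1 + j) / a (n + N + 1)| ≤ δ⁻¹ ^ j := by
          rw [abs_of_nonneg (div_nonneg (hapos _).le (hapos _).le)]
          exact hPb j (n + N + 1)
        have hY : |a (n + 1) / a n| ≤ δ⁻¹ := by
          rw [abs_of_nonneg (div_nonneg (hapos _).le (hapos _).le)]
          exact hHub n
        exact abs_mul_sub_mul hX' hY
      have step := totalVar_le_two N (fun n => a (n + (j + 1)) / a n) (fun t => a (t + 1) / a t)
        (fun t => a (t + 1 + j) / a (t + 1)) (δ⁻¹ ^ j) δ⁻¹ (pow_nonneg hδi j) hδi m hpt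
      have e3 : totalVar N (fun t => a (t + 1 + j) / a (t + 1)) m
          = totalVar N (fun n => a (n + j) / a n) (m + 1) :=
        totalVar_shift_eq N (fun n => a (n + j) / a n) m 1
      rw [e3] at step
      calc totalVar N (fun n => a (n + (j + 1)) / a n) m
          ≤ ENNReal.ofReal (δ⁻¹ ^ j) * totalVar N (fun t => a (t + 1) / a t) m
            + ENNReal.ofReal δ⁻¹ * totalVar N (fun n => a (n + j) / a n) (m + 1) := step
        _ ≤ ENNReal.ofReal (δ⁻¹ ^ j) * (ENNReal.ofReal KH *
              (totalVar N (fun n => 1 / a n) m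
                + totalVar N (fun n => r n * a n - a (n - 1)) m))
            + ENNReal.ofReal δ⁻¹ * (ENNReal.ofReal C *
              (totalVar N (fun n => 1 / a n) (m + 1)
                + totalVar N (fun n => r n * a n - a (n - 1)) (m + 1))) :=
            add_le_add (mul_le_mul_right (hVH m) _) (mul_le_mul_right (hC (m + 1)) _)
        _ ≤ ENNReal.ofReal (δ⁻¹ ^ j) * (ENNReal.ofReal KH *
              (totalVar N (fun n => 1 / a n) m
                + totalVar N (fun n => r n * a n - a (n - 1)) m))
            + ENNReal.ofReal δ⁻¹ * (ENNReal.ofReal C *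
              (totalVar N (fun n => 1 / a n) m
                + totalVar N (fun n => r n * a n - a (n - 1)) m)) := by
            refine add_le_add le_rfl (mul_le_mul_right (mul_le_mul_right ?_ _) _)
            exact add_le_add (totalVar_shift_le N _ m 1) (totalVar_shift_le N _ m 1)
        _ = ENNReal.ofReal (δ⁻¹ ^ j * KH + δ⁻¹ * C) *
              (totalVar N (fun n => 1 / a n) m
                + totalVar N (fun n => r n * a n - a (n - 1)) m) := by
            rw [ENNReal.ofReal_add (mul_nonneg (pow_nonneg hδi j) hKH0) (mul_nonneg hδi hC0),
              ENNReal.ofReal_mul (pow_nonneg hδi j), ENNReal.ofReal_mul hδi, add_mul,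
              mul_assoc, mul_assoc]
  -- final assembly
  intro j _
  obtain ⟨Cj, hCj0, hCj⟩ := hP j
  have hMW0 : 0 ≤ max W α⁻¹ := le_trans hW0 (le_max_left _ _)
  refine ⟨1 + Cj + max W α⁻¹, by linarith, fun m _ => ?_⟩
  have h1 := hCj m
  have h2 := hVb m
  calc totalVar N (fun n => 1 / a n) m + totalVar N (fun n => a (n + j) / a n) m
        + totalVar N (fun n => b n / a n) m
      ≤ (totalVar N (fun n => 1 / a n) m + totalVar N (fun n => r n * a n - a (n - 1)) m
          + totalVar N (fun n => b n - q n * a n) m)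
        + ENNReal.ofReal Cj * (totalVar N (fun n => 1 / a n) m
          + totalVar N (fun n => r n * a n - a (n - 1)) m
          + totalVar N (fun n => b n - q n * a n) m)
        + ENNReal.ofReal (max W α⁻¹) * (totalVar N (fun n => 1 / a n) m
          + totalVar N (fun n => r n * a n - a (n - 1)) m
          + totalVar N (fun n => b n - q n * a n) m) := by
        refine add_le_add (add_le_add ?_ ?_) ?_
        · exact le_trans le_self_add le_self_add
        · exact le_trans h1 (mul_le_mul_right le_self_add _)
        · exact le_trans h2 (mul_le_mul_right (add_le_add le_self_add le_rfl) _)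
    _ = ENNReal.ofReal (1 + Cj + max W α⁻¹) *
          (totalVar N (fun n => 1 / a n) m + totalVar N (fun n => r n * a n - a (n - 1)) m
            + totalVar N (fun n => b n - q n * a n) m) := by
        rw [ENNReal.ofReal_add (by linarith) hMW0, ENNReal.ofReal_add one_pos.le hCj0,
          ENNReal.ofReal_one, add_mul, add_mul, one_mul]
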